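/- Let S ⊆ ℝⁿ be a nonempty closed convex set. Then ℝⁿ \ S equals the union over x ∈ S of the sets x + (N_S(x) \ {0}). -/

import Mathlib

theorem complement_eq_union_normal_cones (n : ℕ) (S : Set (EuclideanSpace ℝ (Fin n)))
    (hS : S.Nonempty) (hcl : IsClosed S) (hconv : Convex ℝ S) :
    Sᶜ = ⋃ x ∈ S, (x + ·) ''
      ({d | ∀ y ∈ S, (inner ℝ (y - x) d : ℝ) ≤ 0} \ {0}) := by
  ext z
  simp only [Set.mem_compl_iff, Set.mem_iUnion, Set.mem_image, Set.mem_diff,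
    Set.mem_setOf_eq, Set.mem_singleton_iff]
  constructor
  · intro hz
    obtain ⟨x, hxS, hx⟩ := exists_norm_eq_iInf_of_complete_convex hS
      (hcl.isComplete) hconv z
    rw [norm_eq_iInf_iff_real_inner_le_zero hconv hxS] at hx
    refine ⟨x, hxS, z - x, ⟨fun y hy => ?_, fun h0 => ?_⟩, by abel⟩
    · have := hx y hy
      rwa [real_inner_comm] at this
    · exact hz (sub_eq_zero.mp h0 ▸ hxS)
  · rintro ⟨x, hxS, d, ⟨hd, hd0⟩, rfl⟩ hmem
    have := hd _ hmem
    rw [add_sub_cancel_left, real_inner_self_eq_norm_sq] at this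
    have : ‖d‖ = 0 := by nlinarith [norm_nonneg d]
    exact hd0 (norm_eq_zero.mp this)
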